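/- If the model set M(E) is identifiable from (R, C), then the number of pairs (c,r) ∈ C × R for which the generic entry 𝕋 c r is neither 0 nor 1 is at least |E|. -/

import Mathlib

open Set Metric

private theorem aux_fin : ∀ (k n : ℕ) (Ω : Set (Fin n → ℝ)) (f : (Fin n → ℝ) → (Fin k → ℝ)),
    IsOpen Ω → Ω.Nonempty → ContDiffOn ℝ 1 f Ω → Set.InjOn f Ω → n ≤ k := by
  intro k
  induction k with
  | zero =>
    intro n Ω f hΩ hne hcd hinj
    by_contra hn
    push_neg at hn
    obtain ⟨x, hx⟩ := hne
    obtain ⟨ε, hε, hball⟩ := Metric.isOpen_iff.1 hΩ x hx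
    have h0 : (0 : ℕ) < n := Nat.pos_of_ne_zero (by omega)
    set i0 : Fin n := ⟨0, h0⟩
    set y : Fin n → ℝ := x + Pi.single i0 (ε / 2) with hy
    have hyx : y ≠ x := by
      intro h
      have := congrFun h i0
      simp [hy, Pi.single_apply] at this
      linarith
    have hymem : y ∈ Ω := by
      apply hball
      have : dist y x ≤ ε / 2 := by
        rw [dist_pi_le_iff (by linarith)]
        intro b
        simp only [hy, Pi.add_apply, Real.dist_eq, add_sub_cancel_left]
        rcases eq_or_ne b i0 with h | h <;>
          simp [Pi.single_apply, h, abs_of_nonneg (le_of_lt (half_pos hε)), le_of_lt (half_pos hε)]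
      calc dist y x ≤ ε / 2 := this
        _ < ε := by linarith
    exact hyx (hinj hymem hx (funext fun j => j.elim0))
  | succ k ih =>
    intro n Ω f hΩ hne hcd hinj
    set f₁ : (Fin n → ℝ) → ℝ := fun x => f x 0 with hf₁def
    set g : (Fin n → ℝ) → (Fin k → ℝ) := fun x j => f x j.succ with hgdef
    have hf₁cd : ContDiffOn ℝ 1 f₁ Ω := (contDiffOn_pi.1 hcd) 0
    have hgcd : ContDiffOn ℝ 1 g Ω := contDiffOn_pi.2 fun j => (contDiffOn_pi.1 hcd) j.succ
    by_cases hcase : ∀ x ∈ Ω, fderiv ℝ f₁ x = 0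
    · -- f₁ has zero derivative everywhere on Ω; restrict to a ball where f₁ is constant
      obtain ⟨x₀, hx₀⟩ := hne
      obtain ⟨ε, hε, hball⟩ := Metric.isOpen_iff.1 hΩ x₀ hx₀
      have hBsub : ball x₀ ε ⊆ Ω := hball
      have hconst : ∀ y ∈ ball x₀ ε, ∀ z ∈ ball x₀ ε, f₁ y = f₁ z := by
        intro y hy z hz
        have hdiff : DifferentiableOn ℝ f₁ (ball x₀ ε) :=
          (hf₁cd.mono hBsub).differentiableOn one_ne_zero
        have hbound : ∀ w ∈ ball x₀ ε, ‖fderivWithin ℝ f₁ (ball x₀ ε) w‖ ≤ 0 := by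
          intro w hw
          rw [fderivWithin_of_isOpen isOpen_ball hw, hcase w (hBsub hw)]
          simp
        have := (convex_ball x₀ ε).norm_image_sub_le_of_norm_fderivWithin_le hdiff hbound hz hy
        simpa [sub_eq_zero] using this
      have hginj : Set.InjOn g (ball x₀ ε) := by
        intro y hy z hz hgz
        refine hinj (hBsub hy) (hBsub hz) (funext fun j => ?_)
        refine Fin.cases ?_ ?_ j
        · exact hconst y hy z hz
        · intro j'; exact congrFun hgz j'
      have := ih n (ball x₀ ε) g isOpen_ball ⟨x₀, mem_ball_self hε⟩ (hgcd.mono hBsub) hginj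
      omega
    · push_neg at hcase
      obtain ⟨x₀, hx₀, hL0⟩ := hcase
      rcases n with _ | m
      · omega
      set L : (Fin (m + 1) → ℝ) →L[ℝ] ℝ := fderiv ℝ f₁ x₀ with hLdef
      have hLi : ∃ i, L (Pi.single i 1) ≠ 0 := by
        by_contra hall
        push_neg at hall
        apply hL0
        ext v
        have hv : v = ∑ i, v i • (Pi.single i (1:ℝ) : Fin (m+1) → ℝ) := by
          nth_rewrite 1 [pi_eq_sum_univ v]
          refine Finset.sum_congr rfl fun i _ => ?_
          congr 1
          ext j
          simp [Pi.single_apply, eq_comm]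
        rw [hv]
        simp [hall]
      obtain ⟨i, hi⟩ := hLi
      have hsingle : ∀ (c : ℝ), (Pi.single i c : Fin (m+1) → ℝ) = c • (Pi.single i (1:ℝ) : Fin (m+1) → ℝ) := by
        intro c; funext j; simp [Pi.single_apply, mul_ite]
      set Θ : (Fin (m + 1) → ℝ) → (Fin (m + 1) → ℝ) :=
        fun x j => if j = i then f₁ x else x j with hΘdef
      set A : (Fin (m + 1) → ℝ) →L[ℝ] (Fin (m + 1) → ℝ) :=
        ContinuousLinearMap.pi (fun j => if j = i then L else ContinuousLinearMap.proj j) with hAdef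
      have hf₁at : ContDiffAt ℝ 1 f₁ x₀ := hf₁cd.contDiffAt (hΩ.mem_nhds hx₀)
      have hf₁d : HasFDerivAt f₁ L x₀ := (hf₁at.differentiableAt one_ne_zero).hasFDerivAt
      have hΘd : HasFDerivAt Θ A x₀ := by
        rw [hΘdef, hAdef]
        refine hasFDerivAt_pi.2 fun j => ?_
        rcases eq_or_ne j i with h | h
        · subst h; simpa using hf₁d
        · simp only [if_neg h]
          exact (ContinuousLinearMap.proj (R := ℝ) (φ := fun _ : Fin (m+1) => ℝ) j).hasFDerivAt
      have hA0 : ∀ v, A v = 0 → v = 0 := by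
        intro v hv
        have hvj : ∀ j, j ≠ i → v j = 0 := by
          intro j hj
          have := congrFun hv j
          simpa [hAdef, if_neg hj] using this
        have hvi : L v = 0 := by
          have := congrFun hv i
          simpa [hAdef] using this
        have hvs : v = Pi.single i (v i) := by
          funext j
          rcases eq_or_ne j i with h | h
          · subst h; simp
          · simp [Pi.single_apply, h, hvj j h]
        have hvz : v i = 0 := by
          have : L v = v i * L (Pi.single i 1) := by
            rw [hvs, hsingle (v i)]
            simp
          rw [this] at hvi
          rcases mul_eq_zero.1 hvi with h | h
          · exact h
          · exact absurd h hi
        rw [hvs, hvz]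
        simp
      have hAinj : Function.Injective A := by
        intro v w hvw
        have := hA0 (v - w) (by rw [map_sub, hvw, sub_self])
        exact sub_eq_zero.1 this
      have hAsurj : Function.Surjective (A : (Fin (m+1) → ℝ) →ₗ[ℝ] (Fin (m+1) → ℝ)) :=
        LinearMap.injective_iff_surjective.1 hAinj
      set eA : (Fin (m+1) → ℝ) ≃L[ℝ] (Fin (m+1) → ℝ) :=
        (LinearEquiv.ofBijective (A : (Fin (m+1) → ℝ) →ₗ[ℝ] (Fin (m+1) → ℝ))
          ⟨hAinj, hAsurj⟩).toContinuousLinearEquiv with heAdef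
      have hcoe : (eA : (Fin (m+1) → ℝ) →L[ℝ] (Fin (m+1) → ℝ)) = A :=
        ContinuousLinearMap.ext fun v => rfl
      have hΘd' : HasFDerivAt Θ (eA : (Fin (m+1) → ℝ) →L[ℝ] (Fin (m+1) → ℝ)) x₀ := by
        rw [hcoe]; exact hΘd
      have hΘat : ContDiffAt ℝ 1 Θ x₀ := by
        rw [hΘdef]
        refine contDiffAt_pi.2 fun j => ?_
        rcases eq_or_ne j i with h | h
        · subst h; simpa using hf₁at
        · simp only [if_neg h]
          exact ((ContinuousLinearMap.proj (R := ℝ) (φ := fun _ : Fin (m+1) => ℝ) j).contDiff (n := 1)).contDiffAt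
      set ph := hΘat.toOpenPartialHomeomorph Θ hΘd' one_ne_zero with hphdef
      have hphcoe : (ph : (Fin (m+1) → ℝ) → (Fin (m+1) → ℝ)) = Θ := rfl
      have hsrc : x₀ ∈ ph.source := hΘat.mem_toOpenPartialHomeomorph_source hΘd' one_ne_zero
      have htgt : Θ x₀ ∈ ph.target := hΘat.image_mem_toOpenPartialHomeomorph_target hΘd' one_ne_zero
      set ψ : (Fin (m+1) → ℝ) → (Fin (m+1) → ℝ) := fun y => ph.symm y with hψdef
      have hψat : ContDiffAt ℝ 1 ψ (Θ x₀) := hΘat.to_localInverse hΘd' one_ne_zero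
      obtain ⟨u, hu, hψu⟩ := hψat.contDiffOn le_rfl (by norm_num)
      set Vo : Set (Fin (m+1) → ℝ) := interior u with hVodef
      have hVoopen : IsOpen Vo := isOpen_interior
      have hΘx₀Vo : Θ x₀ ∈ Vo := mem_interior_iff_mem_nhds.2 hu
      set c₀ : ℝ := f₁ x₀ with hc₀def
      set u₀ : Fin m → ℝ := fun j => x₀ (i.succAbove j) with hu₀def
      set w : (Fin m → ℝ) → (Fin (m+1) → ℝ) := fun u => i.insertNth c₀ u with hwdef
      have hw0 : w u₀ = Θ x₀ := by
        funext j
        refine Fin.succAboveCases i ?_ ?_ j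
        · simp [hwdef, hΘdef, hc₀def]
        · intro j'
          simp [hwdef, hΘdef, Fin.insertNth_apply_succAbove, (Fin.succAbove_ne i j'), hu₀def]
      have hwcd : ContDiff ℝ 1 w := by
        rw [hwdef]
        refine contDiff_pi.2 fun j => ?_
        refine Fin.succAboveCases i ?_ ?_ j
        · simp only [Fin.insertNth_apply_same]
          exact contDiff_const
        · intro j'
          simp only [Fin.insertNth_apply_succAbove]
          exact (ContinuousLinearMap.proj (R := ℝ) (φ := fun _ : Fin m => ℝ) j').contDiff
      set O : Set (Fin (m+1) → ℝ) := Vo ∩ (ph.target ∩ ψ ⁻¹' (ph.source ∩ Ω)) with hOdef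
      have hOopen : IsOpen O :=
        hVoopen.inter (ph.continuousOn_symm.isOpen_inter_preimage ph.open_target
          (ph.open_source.inter hΩ))
      have hΘx₀O : Θ x₀ ∈ O := by
        refine ⟨hΘx₀Vo, htgt, ?_⟩
        have : ψ (Θ x₀) = x₀ := by
          rw [hψdef, ← hphcoe]
          exact ph.left_inv hsrc
        rw [Set.mem_preimage, this]
        exact ⟨hsrc, hx₀⟩
      set U' : Set (Fin m → ℝ) := w ⁻¹' O with hU'def
      have hU'open : IsOpen U' := hOopen.preimage hwcd.continuous
      have hu₀U' : u₀ ∈ U' := by rw [hU'def, Set.mem_preimage, hw0]; exact hΘx₀O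
      set φ : (Fin m → ℝ) → (Fin (m+1) → ℝ) := fun v => ψ (w v) with hφdef
      have hφΩ : ∀ v ∈ U', φ v ∈ Ω := by
        intro v hv
        exact hv.2.2.2
      have hΘφ : ∀ v ∈ U', Θ (φ v) = w v := by
        intro v hv
        have := ph.right_inv hv.2.1
        rwa [hphcoe] at this
      have hf₁φ : ∀ v ∈ U', f₁ (φ v) = c₀ := by
        intro v hv
        have h1 := congrFun (hΘφ v hv) i
        simp only [hΘdef, if_pos rfl] at h1
        rw [h1, hwdef]
        simp
      have hφinj : Set.InjOn φ U' := by
        intro v hv v' hv' hφvv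
        have hww : w v = w v' := by
          rw [← hΘφ v hv, ← hΘφ v' hv', hφvv]
        funext j
        have := congrFun hww (i.succAbove j)
        simpa [hwdef, Fin.insertNth_apply_succAbove] using this
      have hφcd : ContDiffOn ℝ 1 φ U' := by
        refine ContDiffOn.comp (hψu.mono interior_subset) hwcd.contDiffOn ?_
        intro v hv
        exact hv.1
      have hgφcd : ContDiffOn ℝ 1 (g ∘ φ) U' :=
        hgcd.comp hφcd hφΩ
      have hgφinj : Set.InjOn (g ∘ φ) U' := by
        intro v hv v' hv' hgg
        refine hφinj hv hv' (hinj (hφΩ v hv) (hφΩ v' hv') (funext fun j => ?_))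
        refine Fin.cases ?_ ?_ j
        · exact (hf₁φ v hv).trans (hf₁φ v' hv').symm
        · intro j'
          exact congrFun hgg j'
      have := ih m U' (g ∘ φ) hU'open ⟨u₀, hu₀U'⟩ hgφcd hgφinj
      omega

private theorem aux_card {ι κ : Type*} [Fintype ι] [Fintype κ]
    (Ω : Set (ι → ℝ)) (f : (ι → ℝ) → (κ → ℝ)) (hΩ : IsOpen Ω) (hne : Ω.Nonempty)
    (hcd : ContDiffOn ℝ 1 f Ω) (hinj : Set.InjOn f Ω) :
    Fintype.card ι ≤ Fintype.card κ := by
  classical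
  set n := Fintype.card ι with hn
  set k := Fintype.card κ with hk
  set e : ι ≃ Fin n := Fintype.equivFin ι with he
  set e' : κ ≃ Fin k := Fintype.equivFin κ with he'
  set P : (Fin n → ℝ) ≃L[ℝ] (ι → ℝ) :=
    (LinearEquiv.funCongrLeft ℝ ℝ e).toContinuousLinearEquiv with hP
  set Q : (κ → ℝ) ≃L[ℝ] (Fin k → ℝ) :=
    (LinearEquiv.funCongrLeft ℝ ℝ e'.symm).toContinuousLinearEquiv with hQ
  set F : (Fin n → ℝ) → (Fin k → ℝ) := fun y => Q (f (P y)) with hF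
  set Ω' : Set (Fin n → ℝ) := ⇑P ⁻¹' Ω with hΩ'
  have hΩ'open : IsOpen Ω' := hΩ.preimage P.continuous
  have hΩ'ne : Ω'.Nonempty := by
    obtain ⟨x, hx⟩ := hne
    exact ⟨P.symm x, by simpa [hΩ'] using hx⟩
  have hFcd : ContDiffOn ℝ 1 F Ω' := by
    have h1 : ContDiffOn ℝ 1 (f ∘ ⇑P) Ω' :=
      hcd.comp ((P : (Fin n → ℝ) →L[ℝ] (ι → ℝ)).contDiff.contDiffOn) (fun y hy => hy)
    exact (Q : (κ → ℝ) →L[ℝ] (Fin k → ℝ)).contDiff.comp_contDiffOn h1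
  have hFinj : Set.InjOn F Ω' := by
    intro y hy y' hy' hF'
    have h1 : f (P y) = f (P y') := Q.injective hF'
    have h2 : P y = P y' := hinj hy hy' h1
    exact P.injective h2
  exact aux_fin k n Ω' F hΩ'open hΩ'ne hFcd hFinj

private theorem contDiff_mveval {σ : Type*} [Fintype σ] (p : MvPolynomial σ ℝ) :
    ContDiff ℝ 1 fun x : σ → ℝ => MvPolynomial.eval x p := by
  induction p using MvPolynomial.induction_on with
  | C a => simpa using contDiff_const (c := a)
  | add p q hp hq =>
      simp only [map_add]
      exact hp.add hq
  | mul_X p e hp =>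
      simp only [map_mul, MvPolynomial.eval_X]
      exact hp.mul ((ContinuousLinearMap.proj (R := ℝ) (φ := fun _ : σ => ℝ) e).contDiff)

/-- The polynomial generic network matrix. -/
private noncomputable def polyG {V : Type*} [Fintype V] [DecidableEq V] (E : Finset (V × V)) :
    Matrix V V (MvPolynomial {e : V × V // e ∈ E} ℝ) :=
  Matrix.of fun j i => if h : (i, j) ∈ E then MvPolynomial.X ⟨(i, j), h⟩ else 0

private lemma map_one_sub_polyG {V : Type*} [Fintype V] [DecidableEq V] (E : Finset (V × V))
    {S : Type*} [CommRing S] (φ : MvPolynomial {e : V × V // e ∈ E} ℝ →+* S) :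
    φ.mapMatrix (1 - polyG E) =
      1 - Matrix.of fun j i => if h : (i, j) ∈ E then φ (MvPolynomial.X ⟨(i, j), h⟩) else 0 := by
  rw [_root_.map_sub, _root_.map_one]
  congr 1
  ext j i
  simp only [RingHom.mapMatrix_apply, Matrix.map_apply, polyG, Matrix.of_apply]
  rw [apply_dite φ, map_zero]



open Matrix

/-- The model set `M(E)`: matrices `G` over `RatFunc ℝ` whose sparsity pattern matches the
edge set `E` (i.e. `G j i ≠ 0 ↔ (i,j) ∈ E`) and such that `I - G` is invertible. -/
def ModelSet {V : Type*} [Fintype V] [DecidableEq V] (E : Finset (V × V)) :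
    Set (Matrix V V (RatFunc ℝ)) :=
  {G | (∀ i j : V, G j i ≠ 0 ↔ (i, j) ∈ E) ∧ IsUnit (1 - G)}

/-- The network response matrix `T(G) = (I - G)⁻¹`. -/
noncomputable def netT {V : Type*} [Fintype V] [DecidableEq V]
    (G : Matrix V V (RatFunc ℝ)) : Matrix V V (RatFunc ℝ) := (1 - G)⁻¹

/-- Identifiability of the model set `M(E)` from excited vertices `R` and measured
vertices `C`. -/
def Identifiable {V : Type*} [Fintype V] [DecidableEq V]
    (E : Finset (V × V)) (R C : Finset V) : Prop :=
  ∀ G₀ ∈ ModelSet E, ∀ G₁ ∈ ModelSet E,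
    (∀ c ∈ C, ∀ r ∈ R, netT G₁ c r = netT G₀ c r) → G₁ = G₀

/-- The generic network matrix `𝔾` over the fraction field of `ℝ[Xₑ : e ∈ E]`:
`𝔾 j i = X (i,j)` if `(i,j) ∈ E`, and `0` otherwise. -/
noncomputable def genG {V : Type*} [Fintype V] [DecidableEq V] (E : Finset (V × V)) :
    Matrix V V (FractionRing (MvPolynomial {e : V × V // e ∈ E} ℝ)) :=
  Matrix.of fun j i =>
    if h : (i, j) ∈ E then
      algebraMap (MvPolynomial {e : V × V // e ∈ E} ℝ) _ (MvPolynomial.X ⟨(i, j), h⟩)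
    else 0

/-- The generic response matrix `𝕋 = (I - 𝔾)⁻¹`. -/
noncomputable def genT {V : Type*} [Fintype V] [DecidableEq V] (E : Finset (V × V)) :
    Matrix V V (FractionRing (MvPolynomial {e : V × V // e ∈ E} ℝ)) :=
  (1 - genG E)⁻¹

set_option maxHeartbeats 1000000 in
set_option synthInstance.maxHeartbeats 400000 in
/-- If `M(E)` is identifiable from `(R, C)`, then the number of pairs `(c,r) ∈ C × R` whose
generic entry `𝕋 c r` is neither `0` nor `1` is at least the number of edges `|E|`. -/
theorem stmt_6 {V : Type*} [Fintype V] [DecidableEq V]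
    (E : Finset (V × V)) (hloop : ∀ i : V, (i, i) ∉ E)
    (R C : Finset V)
    (hid : Identifiable E R C) :
    E.card ≤
      {p : V × V | p.1 ∈ C ∧ p.2 ∈ R ∧ genT E p.1 p.2 ≠ 0 ∧ genT E p.1 p.2 ≠ 1}.ncard := by
  classical
  set K := FractionRing (MvPolynomial {e : V × V // e ∈ E} ℝ) with hK
  set ρ : MvPolynomial {e : V × V // e ∈ E} ℝ →+* K :=
    (algebraMap (MvPolynomial {e : V × V // e ∈ E} ℝ) K) with hρ
  have hρinj : Function.Injective ρ := IsFractionRing.injective _ _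
  set Dp : MvPolynomial {e : V × V // e ∈ E} ℝ := (1 - polyG E).det with hDp
  set Pp : V → V → MvPolynomial {e : V × V // e ∈ E} ℝ :=
    fun c r => (1 - polyG E).adjugate c r with hPp
  -- the generic matrix is the image of the polynomial one
  have hgen : (1 : Matrix V V K) - genG E = ρ.mapMatrix (1 - polyG E) := by
    rw [map_one_sub_polyG]
    rfl
  -- `Dp` is nonzero (evaluate at `0`)
  have hDp0 : MvPolynomial.eval (0 : {e : V × V // e ∈ E} → ℝ) Dp = 1 := by
    rw [hDp, RingHom.map_det, map_one_sub_polyG]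
    have : (Matrix.of fun j i => if h : (i, j) ∈ E then
        (MvPolynomial.eval (0 : {e : V × V // e ∈ E} → ℝ)) (MvPolynomial.X ⟨(i, j), h⟩)
        else 0) = (0 : Matrix V V ℝ) := by
      ext j i
      simp only [Matrix.of_apply]
      split <;> simp
    rw [this, sub_zero, Matrix.det_one]
  have hDpne : Dp ≠ 0 := by
    intro h
    rw [h, map_zero] at hDp0
    exact zero_ne_one hDp0
  have hρD : ρ Dp ≠ 0 := fun h => hDpne (hρinj (by rw [h, map_zero]))
  -- formula for the generic response matrix
  have hgenT : ∀ c r : V, genT E c r = (ρ Dp)⁻¹ * ρ (Pp c r) := by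
    intro c r
    rw [genT, Matrix.inv_def, Matrix.smul_apply, smul_eq_mul, hgen, ← RingHom.map_det,
      ← RingHom.map_adjugate, Ring.inverse_eq_inv']
    rfl
  have hgenT0 : ∀ c r : V, genT E c r = 0 ↔ Pp c r = 0 := by
    intro c r
    rw [hgenT c r]
    constructor
    · intro h
      rcases mul_eq_zero.1 h with h | h
      · exact absurd h (by simpa using hρD)
      · exact hρinj (by rw [h, map_zero])
    · intro h
      rw [h, map_zero, mul_zero]
  have hgenT1 : ∀ c r : V, genT E c r = 1 ↔ Pp c r = Dp := by
    intro c r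
    rw [hgenT c r, inv_mul_eq_one₀ hρD]
    exact ⟨fun h => (hρinj h).symm, fun h => by rw [h]⟩
  -- the informative set as a finset
  set Sfin : Finset (V × V) := Finset.univ.filter
    (fun p => p.1 ∈ C ∧ p.2 ∈ R ∧ genT E p.1 p.2 ≠ 0 ∧ genT E p.1 p.2 ≠ 1) with hSfin
  have hset : {p : V × V | p.1 ∈ C ∧ p.2 ∈ R ∧ genT E p.1 p.2 ≠ 0 ∧ genT E p.1 p.2 ≠ 1}
      = ↑Sfin := by
    ext p
    simp [hSfin]
  rw [hset, Set.ncard_coe_finset, ← Fintype.card_coe E, ← Fintype.card_coe Sfin]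
  -- real evaluation of the network
  set rG : ({e : V × V // e ∈ E} → ℝ) → Matrix V V ℝ := fun x =>
    Matrix.of fun j i => if h : (i, j) ∈ E then x ⟨(i, j), h⟩ else 0 with hrG
  have hrGmap : ∀ x, (1 : Matrix V V ℝ) - rG x
      = (MvPolynomial.eval x).mapMatrix (1 - polyG E) := by
    intro x
    rw [map_one_sub_polyG]
    congr 1
    ext j i
    simp only [hrG, Matrix.of_apply, MvPolynomial.eval_X]
  set Ω : Set ({e : V × V // e ∈ E} → ℝ) :=
    {x | (∀ e, x e ≠ 0) ∧ MvPolynomial.eval x Dp ≠ 0} with hΩ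
  have hΩopen : IsOpen Ω := by
    have : Ω = (⋂ e : {e : V × V // e ∈ E}, {x : {e : V × V // e ∈ E} → ℝ | x e ≠ 0}) ∩
        {x | MvPolynomial.eval x Dp ≠ 0} := by
      ext x
      simp [hΩ, Set.mem_iInter]
    rw [this]
    refine IsOpen.inter (isOpen_iInter_of_finite fun e => ?_) ?_
    · exact isOpen_compl_singleton.preimage (continuous_apply e)
    · exact isOpen_compl_singleton.preimage (contDiff_mveval Dp).continuous
  have hΩne : Ω.Nonempty := by
    have h0 : (0 : {e : V × V // e ∈ E} → ℝ) ∈ {x | MvPolynomial.eval x Dp ≠ 0} := by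
      show MvPolynomial.eval 0 Dp ≠ 0
      rw [hDp0]
      exact one_ne_zero
    obtain ⟨ε, hε, hball⟩ := Metric.isOpen_iff.1
      (isOpen_compl_singleton.preimage (contDiff_mveval Dp).continuous) 0 h0
    refine ⟨fun _ => ε / 2, fun e => by positivity, ?_⟩
    have : dist (fun _ : {e : V × V // e ∈ E} => ε / 2) (0 : {e : V × V // e ∈ E} → ℝ)
        ≤ ε / 2 := by
      rw [dist_pi_le_iff (by positivity)]
      intro e
      simp [Real.dist_eq, abs_div, abs_of_pos hε]
    exact hball (by rw [Metric.mem_ball]; linarith)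
  -- the response entries at a real point
  set τ : ({e : V × V // e ∈ E} → ℝ) → V → V → ℝ := fun x c r =>
    (MvPolynomial.eval x Dp)⁻¹ * MvPolynomial.eval x (Pp c r) with hτ
  -- membership in the model set and response computation
  have hmodel : ∀ x ∈ Ω, ((algebraMap ℝ (RatFunc ℝ)).mapMatrix (rG x) ∈ ModelSet E) ∧
      (∀ c r : V, netT ((algebraMap ℝ (RatFunc ℝ)).mapMatrix (rG x)) c r
        = algebraMap ℝ (RatFunc ℝ) (τ x c r)) := by
    intro x hx
    obtain ⟨hx1, hx2⟩ := hx
    have halg : Function.Injective (algebraMap ℝ (RatFunc ℝ)) := (algebraMap ℝ (RatFunc ℝ)).injective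
    have hdet : ((1 : Matrix V V ℝ) - rG x).det = MvPolynomial.eval x Dp := by
      rw [hrGmap x, ← RingHom.map_det]
    have hsub : (1 : Matrix V V (RatFunc ℝ)) - (algebraMap ℝ (RatFunc ℝ)).mapMatrix (rG x)
        = (algebraMap ℝ (RatFunc ℝ)).mapMatrix (1 - rG x) := by
      rw [_root_.map_sub, _root_.map_one]
    have hdet2 : ((1 : Matrix V V (RatFunc ℝ)) - (algebraMap ℝ (RatFunc ℝ)).mapMatrix (rG x)).det
        = algebraMap ℝ (RatFunc ℝ) (MvPolynomial.eval x Dp) := by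
      rw [hsub, ← RingHom.map_det, hdet]
    have hdet2ne : ((1 : Matrix V V (RatFunc ℝ)) -
        (algebraMap ℝ (RatFunc ℝ)).mapMatrix (rG x)).det ≠ 0 := by
      rw [hdet2]
      exact fun h => hx2 (halg (by rw [h, map_zero]))
    refine ⟨⟨?_, ?_⟩, ?_⟩
    · intro i j
      simp only [RingHom.mapMatrix_apply, Matrix.map_apply, hrG, Matrix.of_apply]
      constructor
      · intro h
        by_contra hmem
        rw [dif_neg hmem, map_zero] at h
        exact h rfl
      · intro h
        rw [dif_pos h]
        exact fun h0 => hx1 _ (halg (by rw [h0, map_zero]))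
    · rw [Matrix.isUnit_iff_isUnit_det, isUnit_iff_ne_zero]
      exact hdet2ne
    · intro c r
      rw [netT, Matrix.inv_def, Matrix.smul_apply, smul_eq_mul, Ring.inverse_eq_inv']
      have hadj : ((1 : Matrix V V (RatFunc ℝ)) -
          (algebraMap ℝ (RatFunc ℝ)).mapMatrix (rG x)).adjugate c r
          = algebraMap ℝ (RatFunc ℝ) (MvPolynomial.eval x (Pp c r)) := by
        rw [hsub, ← RingHom.map_adjugate]
        simp only [RingHom.mapMatrix_apply, Matrix.map_apply]
        congr 1
        rw [hrGmap x, ← RingHom.map_adjugate]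
        rfl
      rw [hadj, hdet2, hτ, _root_.map_mul, map_inv₀]
  -- the response map on informative pairs
  set Φ : ({e : V × V // e ∈ E} → ℝ) → ({p // p ∈ Sfin} → ℝ) :=
    fun x s => τ x s.1.1 s.1.2 with hΦ
  have hΦcd : ContDiffOn ℝ 1 Φ Ω := by
    refine contDiffOn_pi.2 fun s => ?_
    refine ContDiffOn.mul ?_ ((contDiff_mveval (Pp s.1.1 s.1.2)).contDiffOn)
    exact ((contDiff_mveval Dp).contDiffOn).inv fun x hx => hx.2
  have hΦinj : Set.InjOn Φ Ω := by
    intro x hx y hy hΦxy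
    obtain ⟨hxmod, hxres⟩ := hmodel x hx
    obtain ⟨hymod, hyres⟩ := hmodel y hy
    have halg : Function.Injective (algebraMap ℝ (RatFunc ℝ)) := (algebraMap ℝ (RatFunc ℝ)).injective
    have hresp : ∀ c ∈ C, ∀ r ∈ R,
        netT ((algebraMap ℝ (RatFunc ℝ)).mapMatrix (rG y)) c r
        = netT ((algebraMap ℝ (RatFunc ℝ)).mapMatrix (rG x)) c r := by
      intro c hc r hr
      rw [hxres c r, hyres c r]
      congr 1
      by_cases h0 : genT E c r = 0
      · have hP0 : Pp c r = 0 := (hgenT0 c r).1 h0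
        rw [hτ]
        simp [hP0]
      · by_cases h1 : genT E c r = 1
        · have hPD : Pp c r = Dp := (hgenT1 c r).1 h1
          rw [hτ]
          simp only [hPD]
          rw [inv_mul_cancel₀ hy.2, inv_mul_cancel₀ hx.2]
        · have hmem : (c, r) ∈ Sfin := by
            rw [hSfin]
            simp only [Finset.mem_filter, Finset.mem_univ, true_and]
            exact ⟨hc, hr, h0, h1⟩
          exact (congrFun hΦxy ⟨(c, r), hmem⟩).symm
    have hGG := hid _ hxmod _ hymod hresp
    have hrGxy : rG y = rG x := by
      ext j i
      have := congrFun (congrFun hGG j) i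
      simp only [RingHom.mapMatrix_apply, Matrix.map_apply] at this
      exact halg this
    funext e
    obtain ⟨⟨i, j⟩, he⟩ := e
    have := congrFun (congrFun hrGxy j) i
    simpa [hrG, dif_pos he] using this.symm
  exact aux_card Ω Φ hΩopen hΩne hΦcd hΦinj
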